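/- Modulo I_{q+1}, the element T_q(s; r_1,…,r_q) is independent of s and additive in each r_i: T_q(s; r_1,…,r_q) ≡ T_q(s'; r_1,…,r_q) mod I_{q+1}, and T_q(s; r_1 + n_1, r_2,…,r_q) ≡ T_q(s; r_1, r_2,…,r_q) + T_q(s; n_1, r_2,…,r_q) mod I_{q+1}. Consequently dim(I_q / I_{q+1}) ≤ N^q. -/

import Mathlib

/-- The element `T(r)` (with the convention `T(0) = 0`). -/
noncomputable def TT {N : ℕ} (r : Fin N → ℤ) : (Fin N → ℤ) →₀ ℂ :=
  Finsupp.single r 1 - Finsupp.single 0 1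

/-- `T_q(s; r_1, …, r_q) = Σ_{I ⊆ {1,…,q}} (-1)^{|I|} T(s + Σ_{i∈I} r_i)`. -/
noncomputable def Tq {N : ℕ} (q : ℕ) (s : Fin N → ℤ) (r : Fin q → (Fin N → ℤ)) :
    (Fin N → ℤ) →₀ ℂ :=
  ∑ I : Finset (Fin q), ((-1 : ℂ) ^ I.card) • TT (s + ∑ i ∈ I, r i)

/-- `I_q` is the span of all the `T_q` expressions. -/
noncomputable def Iq (N q : ℕ) : Submodule ℂ ((Fin N → ℤ) →₀ ℂ) :=
  Submodule.span ℂ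
    {x | ∃ (s : Fin N → ℤ) (r : Fin q → (Fin N → ℤ)), x = Tq q s r}

abbrev AA (N : ℕ) : Type := AddMonoidAlgebra ℂ (Fin N → ℤ)

noncomputable def XX {N : ℕ} (v : Fin N → ℤ) : AA N := AddMonoidAlgebra.single v 1

lemma XX_zero {N : ℕ} : XX (0 : Fin N → ℤ) = 1 := rfl

lemma XX_add {N : ℕ} (a b : Fin N → ℤ) : XX (a + b) = XX a * XX b := by
  rw [XX, XX, XX, AddMonoidAlgebra.single_mul_single, mul_one]

lemma TT_cast {N : ℕ} (v : Fin N → ℤ) : TT v = (XX v - 1 : AA N).coeff := rfl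

noncomputable def PP {N q : ℕ} (r : Fin q → (Fin N → ℤ)) : AA N := ∏ i, (1 - XX (r i))

lemma Tq_cast {N q : ℕ} (s : Fin N → ℤ) (r : Fin q → (Fin N → ℤ)) :
    Tq q s r
      = (∑ I : Finset (Fin q), ((-1 : ℂ) ^ I.card) • (XX (s + ∑ i ∈ I, r i) - 1) : AA N).coeff := by
  rw [AddMonoidAlgebra.coeff_sum]; rfl

lemma neg_one_pow_smul {N : ℕ} (c : ℕ) (y : AA N) :
    ((-1 : ℂ) ^ c) • y = (-1 : AA N) ^ c * y := by
  have h1 : (-1 : AA N) = (-1 : ℂ) • (1 : AA N) := by simp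
  rw [h1, smul_pow, one_pow, smul_mul_assoc, one_mul]

lemma XX_prod {N q : ℕ} (I : Finset (Fin q)) (r : Fin q → (Fin N → ℤ)) :
    ∏ i ∈ I, XX (r i) = XX (∑ i ∈ I, r i) := by
  simp only [XX]
  rw [AddMonoidAlgebra.prod_single]
  simp

lemma PP_expand {N q : ℕ} (r : Fin q → (Fin N → ℤ)) :
    PP r = ∑ I : Finset (Fin q), ((-1 : ℂ) ^ I.card) • XX (∑ i ∈ I, r i) := by
  classical
  rw [PP]
  have h : ∀ i : Fin q, (1 - XX (r i) : AA N) = -XX (r i) + 1 := fun i => by ring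
  rw [Finset.prod_congr rfl (fun i _ => h i), Finset.prod_add, ← Finset.powerset_univ]
  refine Finset.sum_congr rfl fun I _ => ?_
  rw [Finset.prod_const_one, mul_one, neg_one_pow_smul]
  have h2 : ∀ i ∈ I, -XX (r i) = (-1 : AA N) * XX (r i) := fun i _ => by ring
  rw [Finset.prod_congr rfl h2, Finset.prod_mul_distrib, Finset.prod_const, XX_prod]

lemma Tq_eq {N q : ℕ} (hq : 1 ≤ q) (s : Fin N → ℤ) (r : Fin q → (Fin N → ℤ)) :
    Tq q s r = (XX s * PP r : AA N).coeff := by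
  haveI : Nonempty (Fin q) := Fin.pos_iff_nonempty.mp hq
  have hsum : (∑ I : Finset (Fin q), ((-1 : ℂ)) ^ I.card) = 0 := by
    have h := Finset.sum_powerset_neg_one_pow_card_of_nonempty
      (x := (Finset.univ : Finset (Fin q))) Finset.univ_nonempty
    have h2 : (∑ I : Finset (Fin q), ((-1 : ℂ)) ^ I.card)
        = ((∑ I ∈ (Finset.univ : Finset (Fin q)).powerset, (-1 : ℤ) ^ I.card : ℤ) : ℂ) := by
      rw [Finset.powerset_univ]; push_cast; rfl
    rw [h2, h]; norm_num
  have h1 : (XX s * PP r : AA N)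
      = ∑ I : Finset (Fin q), ((-1 : ℂ) ^ I.card) • (XX (s + ∑ i ∈ I, r i) : AA N) := by
    rw [PP_expand, Finset.mul_sum]
    refine Finset.sum_congr rfl fun I _ => ?_
    rw [mul_smul_comm, ← XX_add]
  rw [Tq_cast, h1]
  congr 1
  simp only [smul_sub, Finset.sum_sub_distrib, ← Finset.sum_smul, hsum, zero_smul, sub_zero]

lemma Tq_mem_Iq {N q : ℕ} (s : Fin N → ℤ) (r : Fin q → (Fin N → ℤ)) :
    Tq q s r ∈ Iq N q :=
  Submodule.subset_span ⟨s, r, rfl⟩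

lemma PP_cons {N q : ℕ} (a : Fin N → ℤ) (r : Fin q → (Fin N → ℤ)) :
    PP (Fin.cons a r) = (1 - XX a) * PP r := by
  simp [PP, Fin.prod_univ_succ]

lemma PP_update {N q : ℕ} (r : Fin q → (Fin N → ℤ)) (k : Fin q) (v : Fin N → ℤ) :
    PP (Function.update r k v)
      = (1 - XX v) * ∏ i ∈ Finset.univ.erase k, (1 - XX (r i)) := by
  classical
  have h : ∀ j, (1 - XX (Function.update r k v j) : AA N)
      = Function.update (fun j => 1 - XX (r j)) k (1 - XX v) j := fun j =>
    (Function.apply_update (fun _ x => 1 - XX x) r k v j)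
  rw [PP, Finset.prod_congr rfl (fun j _ => h j),
    Finset.prod_update_of_mem (Finset.mem_univ k), Finset.erase_eq]


lemma key1 {N q : ℕ} (s s' : Fin N → ℤ) (r : Fin q → (Fin N → ℤ)) :
    (XX s : AA N) * PP r - XX s' * PP r = XX s * PP (Fin.cons (s' - s) r) := by
  have hx : (XX s : AA N) * XX (s' - s) = XX s' := by
    rw [← XX_add]; congr 1; abel
  rw [PP_cons]
  linear_combination (PP r) * hx

lemma part1 {N : ℕ} (q : ℕ) (hq : 1 ≤ q) (s s' : Fin N → ℤ) (r : Fin q → (Fin N → ℤ)) :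
    Tq q s r - Tq q s' r ∈ Iq N (q + 1) := by
  have key : Tq q s r - Tq q s' r = Tq (q+1) s (Fin.cons (s' - s) r) := by
    rw [Tq_eq hq s, Tq_eq hq s', Tq_eq (by omega) s (Fin.cons (s' - s) r)]
    exact congrArg AddMonoidAlgebra.coeff (key1 s s' r)
  rw [key]
  exact Tq_mem_Iq _ _

lemma key2 {N q : ℕ} (s a b : Fin N → ℤ) (k : Fin q) (r : Fin q → (Fin N → ℤ)) :
    (XX s : AA N) * PP (Function.update r k (a + b))
      - XX s * PP (Function.update r k a) - XX s * PP (Function.update r k b)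
      = -(XX s * PP (Fin.cons a (Function.update r k b))) := by
  rw [PP_cons, PP_update r k (a + b), PP_update r k a, PP_update r k b, XX_add]
  ring

lemma part2 {N : ℕ} (q : ℕ) (hq : 1 ≤ q) (s : Fin N → ℤ) (k : Fin q)
    (a b : Fin N → ℤ) (r : Fin q → (Fin N → ℤ)) :
    Tq q s (Function.update r k (a + b)) - Tq q s (Function.update r k a)
      - Tq q s (Function.update r k b) ∈ Iq N (q + 1) := by
  have key : Tq q s (Function.update r k (a + b)) - Tq q s (Function.update r k a)
      - Tq q s (Function.update r k b)
      = -(Tq (q+1) s (Fin.cons a (Function.update r k b))) := by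
    rw [Tq_eq hq s, Tq_eq hq s, Tq_eq hq s,
      Tq_eq (by omega) s (Fin.cons a (Function.update r k b))]
    exact congrArg AddMonoidAlgebra.coeff (key2 s a b k r)
  rw [key]
  exact neg_mem (Tq_mem_Iq _ _)

lemma part3 {N : ℕ} (q : ℕ) (hq : 1 ≤ q) :
    Module.rank ℂ ↥((Iq N q).map (Iq N (q + 1)).mkQ) ≤ (N : Cardinal) ^ q := by
  classical
  set π := (Iq N (q+1)).mkQ with hπ
  set g : (Fin q → Fin N) → (((Fin N → ℤ) →₀ ℂ) ⧸ Iq N (q+1)) :=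
    fun j => π (Tq q 0 (fun i => Pi.single (j i) 1)) with hg
  have key : ∀ (k : ℕ) (r : Fin q → (Fin N → ℤ)),
      (∀ i : Fin q, k ≤ (i : ℕ) → ∃ j, r i = Pi.single j 1) →
      π (Tq q 0 r) ∈ Submodule.span ℂ (Set.range g) := by
    intro k
    induction k with
    | zero =>
      intro r hr
      choose j hj using fun i => hr i (Nat.zero_le _)
      have hrr : r = fun i => Pi.single (j i) 1 := funext hj
      rw [hrr]
      exact Submodule.subset_span ⟨j, rfl⟩
    | succ k ih =>
      intro r hr
      by_cases hk : k < q
      · set i0 : Fin q := ⟨k, hk⟩ with hi0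
        have hadd : ∀ a b : Fin N → ℤ,
            π (Tq q 0 (Function.update r i0 (a + b)))
              = π (Tq q 0 (Function.update r i0 a))
                + π (Tq q 0 (Function.update r i0 b)) := by
          intro a b
          have h0 : π (Tq q 0 (Function.update r i0 (a + b))
              - Tq q 0 (Function.update r i0 a)
              - Tq q 0 (Function.update r i0 b)) = 0 := by
            rw [hπ, Submodule.mkQ_apply, Submodule.Quotient.mk_eq_zero]
            exact part2 q hq 0 i0 a b r
          rw [map_sub, map_sub, sub_sub, sub_eq_zero] at h0
          exact h0
        let φ : (Fin N → ℤ) →+ (((Fin N → ℤ) →₀ ℂ) ⧸ Iq N (q+1)) :=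
          AddMonoidHom.mk' (fun v => π (Tq q 0 (Function.update r i0 v))) hadd
        have φ_apply : ∀ v, φ v = π (Tq q 0 (Function.update r i0 v)) := fun _ => rfl
        have hdecomp : r i0 = ∑ j : Fin N, (r i0 j) • Pi.single j (1 : ℤ) := by
          conv_lhs => rw [← Finset.univ_sum_single (r i0)]
          refine Finset.sum_congr rfl fun j _ => ?_
          ext m
          simp [Pi.single_apply]
        have hmain : π (Tq q 0 r) = ∑ j : Fin N, (r i0 j) • φ (Pi.single j 1) := by
          have h1 : π (Tq q 0 r) = φ (r i0) := by
            rw [φ_apply, Function.update_eq_self]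
          rw [h1]
          conv_lhs => rw [hdecomp]
          rw [map_sum]
          exact Finset.sum_congr rfl fun j _ => map_zsmul φ _ _
        rw [hmain]
        refine Submodule.sum_mem _ fun j _ => ?_
        have hj : φ (Pi.single j 1) ∈ Submodule.span ℂ (Set.range g) := by
          rw [φ_apply]
          refine ih (Function.update r i0 (Pi.single j 1)) fun i hi => ?_
          by_cases hii : i = i0
          · exact ⟨j, by rw [hii, Function.update_self]⟩
          · rw [Function.update_of_ne hii]
            refine hr i ?_
            have hne : (i : ℕ) ≠ k := fun hc => hii (Fin.ext (by simpa [hi0] using hc))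
            omega
        have hmem : ((r i0 j : ℂ)) • φ (Pi.single j 1) ∈ Submodule.span ℂ (Set.range g) :=
          Submodule.smul_mem _ _ hj
        rwa [Int.cast_smul_eq_zsmul] at hmem
      · exact ih r fun i hi => absurd (lt_of_le_of_lt hi i.isLt) hk
  have main : ∀ (s : Fin N → ℤ) (r : Fin q → (Fin N → ℤ)),
      π (Tq q s r) ∈ Submodule.span ℂ (Set.range g) := by
    intro s r
    have hs : π (Tq q s r) = π (Tq q 0 r) := by
      rw [hπ, Submodule.mkQ_apply, Submodule.mkQ_apply, Submodule.Quotient.eq]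
      exact part1 q hq s 0 r
    rw [hs]
    exact key q r fun i hi => absurd (lt_of_le_of_lt hi i.isLt) (lt_irrefl q)
  have hle : (Iq N q).map π ≤ Submodule.span ℂ (Set.range g) := by
    have hmap : (Iq N q).map π = Submodule.span ℂ
        (π '' {x | ∃ (s : Fin N → ℤ) (r : Fin q → (Fin N → ℤ)), x = Tq q s r}) :=
      Submodule.map_span π _
    rw [hmap, Submodule.span_le]
    rintro x ⟨y, ⟨s, r, rfl⟩, rfl⟩
    exact main s r
  calc Module.rank ℂ ↥((Iq N q).map π)
      ≤ Module.rank ℂ ↥(Submodule.span ℂ (Set.range g)) := Submodule.rank_mono hle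
    _ ≤ Cardinal.mk ↥(Set.range g) := rank_span_le _
    _ ≤ Cardinal.mk (Fin q → Fin N) := Cardinal.mk_range_le
    _ = ((N ^ q : ℕ) : Cardinal) := by simp [Cardinal.mk_fintype]
    _ = (N : Cardinal) ^ q := by push_cast; rfl


theorem Tq_mod_Iq_succ (N : ℕ) :
    (∀ (q : ℕ), 1 ≤ q → ∀ (s s' : Fin N → ℤ) (r : Fin q → (Fin N → ℤ)),
      Tq q s r - Tq q s' r ∈ Iq N (q + 1)) ∧
    (∀ (q : ℕ) (s r₁ n₁ : Fin N → ℤ) (rest : Fin q → (Fin N → ℤ)),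
      Tq (q + 1) s (Fin.cons (r₁ + n₁) rest)
        - Tq (q + 1) s (Fin.cons r₁ rest)
        - Tq (q + 1) s (Fin.cons n₁ rest) ∈ Iq N (q + 2)) ∧
    (∀ q : ℕ, 1 ≤ q →
      Module.rank ℂ ↥((Iq N q).map (Iq N (q + 1)).mkQ)
        ≤ (N : Cardinal) ^ q) := by
  refine ⟨fun q hq s s' r => part1 q hq s s' r, fun q s r₁ n₁ rest => ?_,
    fun q hq => part3 q hq⟩
  have h := part2 (q + 1) (Nat.le_add_left 1 q) s 0 r₁ n₁ (Fin.cons r₁ rest)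
  rwa [Fin.update_cons_zero, Fin.update_cons_zero, Fin.update_cons_zero] at h
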